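/- arXiv:1312.2752 — 2 statements merged into one kernel-verified Lean document; each statement's English description precedes it below -/
import Mathlib

section
/- Suppose A ∈ C_{m,n} is circulant and both m and n are even. Then A is alternative if and only if its root tensor A_1 is alternative, and A is negatively alternative if and only if A_1 is negatively alternative. -/
open BigOperators

/-- A tensor `B` is alternative if `b_{j_1...j_m}(−1)^{j_1+⋯+j_m−m} ≥ 0` for all indices
(0-based indices: sign exponent is the plain index sum). -/
def Alt {m n : ℕ} (B : (Fin m → Fin n) → ℝ) : Prop :=
  ∀ j : Fin m → Fin n, 0 ≤ B j * (-1 : ℝ) ^ (∑ l, (j l : ℕ))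

private lemma pow_neg_one_congr (a b : ℕ) (h : a % 2 = b % 2) :
    (-1 : ℝ) ^ a = (-1 : ℝ) ^ b := by
  rw [← Nat.div_add_mod a 2, ← Nat.div_add_mod b 2, h, pow_add, pow_add, pow_mul, pow_mul]
  norm_num

open Fin.NatCast in
private lemma shift_iter {m n : ℕ} [NeZero n]
    (A : (Fin (m + 1) → Fin n) → ℝ)
    (hA : ∀ j : Fin (m + 1) → Fin n, A j = A (fun l => j l + 1))
    (j : Fin (m + 1) → Fin n) : ∀ k : ℕ, A j = A (fun l => j l + (k : Fin n))
  | 0 => by simp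
  | (k + 1) => by
      rw [shift_iter A hA j k, hA]
      congr 1
      funext l
      push_cast
      rw [add_assoc]

open Fin.NatCast in
private lemma key {m n : ℕ} [NeZero n] (hm : Even (m + 1)) (hn : Even n)
    (A : (Fin (m + 1) → Fin n) → ℝ)
    (hA : ∀ j : Fin (m + 1) → Fin n, A j = A (fun l => j l + 1)) :
    Alt A ↔ Alt fun t : Fin m → Fin n => A (Fin.cons 0 t) := by
  constructor
  · intro h t
    have := h (Fin.cons 0 t)
    have hsum : (∑ l, ((Fin.cons 0 t : Fin (m+1) → Fin n) l : ℕ)) = ∑ l, (t l : ℕ) := by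
      rw [Fin.sum_univ_succ]
      simp
    rw [hsum] at this
    simpa using this
  · intro h j
    set c : Fin n := -(j 0) with hc
    have hAj : A j = A (fun l => j l + c) := by
      have := shift_iter A hA j c.val
      rwa [Fin.cast_val_eq_self] at this
    set j' : Fin (m + 1) → Fin n := fun l => j l + c with hj'
    have hj0 : j' 0 = 0 := by simp [hj', hc]
    have hcons : j' = Fin.cons 0 (Fin.tail j') := by
      rw [← hj0]
      exact (Fin.cons_self_tail j').symm
    have htail := h (Fin.tail j')
    simp only at htail
    rw [← hcons, ← hAj] at htail
    -- parity of sums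
    have h2n : 2 ∣ n := hn.two_dvd
    have h2m : 2 ∣ (m + 1) := hm.two_dvd
    have hpar : (∑ l, ((Fin.tail j' l : ℕ))) % 2 = (∑ l, (j l : ℕ)) % 2 := by
      have h1 : (∑ l, ((Fin.tail j' l : ℕ))) % 2 = (∑ l, (j' l : ℕ)) % 2 := by
        rw [Fin.sum_univ_succ, hj0]
        simp [Fin.tail]
      rw [h1]
      have h2 : ∀ l : Fin (m+1), ((j' l : ℕ)) % 2 = ((j l : ℕ) + (c : ℕ)) % 2 := by
        intro l
        have : ((j' l : ℕ)) = ((j l : ℕ) + (c : ℕ)) % n := by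
          simp [hj', Fin.add_def]
        rw [this, Nat.mod_mod_of_dvd _ h2n]
      calc (∑ l, (j' l : ℕ)) % 2 = (∑ l, ((j' l : ℕ)) % 2) % 2 := by
            rw [Finset.sum_nat_mod]
        _ = (∑ l : Fin (m+1), ((j l : ℕ) + (c : ℕ)) % 2) % 2 := by
            simp_rw [h2]
        _ = (∑ l : Fin (m+1), ((j l : ℕ) + (c : ℕ))) % 2 := by
            rw [← Finset.sum_nat_mod]
        _ = ((∑ l, (j l : ℕ)) + (m + 1) * (c : ℕ)) % 2 := by
            rw [Finset.sum_add_distrib]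
            simp [Finset.sum_const, mul_comm]
        _ = (∑ l, (j l : ℕ)) % 2 := by
            obtain ⟨d, hd⟩ := h2m.mul_right (c : ℕ)
            rw [hd]
            exact Nat.add_mul_mod_self_left _ _ _
    rw [pow_neg_one_congr _ _ hpar] at htail
    exact htail

/-- If `A ∈ C_{m+1,n}` is circulant and both the order `m+1` and dimension `n` are even,
then `A` is alternative iff its root tensor is alternative, and `A` is negatively
alternative iff its root tensor is negatively alternative. -/
theorem stmt_9 (m n : ℕ) [NeZero n] (hm : Even (m + 1)) (hn : Even n)
    (A : (Fin (m + 1) → Fin n) → ℝ)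
    (hA : ∀ j : Fin (m + 1) → Fin n, A j = A (fun l => j l + 1)) :
    (Alt A ↔ Alt fun t : Fin m → Fin n => A (Fin.cons 0 t)) ∧
    ((Alt fun j => -A j) ↔ Alt fun t : Fin m → Fin n => -A (Fin.cons 0 t)) := by
  refine ⟨key hm hn A hA, ?_⟩
  have hA' : ∀ j : Fin (m + 1) → Fin n, (fun j => -A j) j = (fun j => -A j) (fun l => j l + 1) := by
    intro j; simp [← hA j]
  exact key hm hn (fun j => -A j) hA'
end

section
/- For any circulant tensor A ∈ C_{m,n}, λ_0(A) = λ_0(sym(A)); that is, the sum of all entries of the root tensor of A equals the sum of all entries of the root tensor of its symmetrization. Moreover, if m and n are both even, λ_{n/2}(A) = λ_{n/2}(sym(A)). -/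
open BigOperators

/-- The symmetrization of a tensor: the average of its entries over all permutations of
the indices. -/
noncomputable def symT {m n : ℕ} (A : (Fin m → Fin n) → ℝ) : (Fin m → Fin n) → ℝ :=
  fun j => (∑ σ : Equiv.Perm (Fin m), A (j ∘ σ)) / (Nat.factorial m : ℝ)

/-- Reindexing a sum over all functions by precomposition with a permutation. -/
lemma sum_comp_perm {m n : ℕ} (f : (Fin m → Fin n) → ℝ) (σ : Equiv.Perm (Fin m)) :
    ∑ j : Fin m → Fin n, f (j ∘ σ) = ∑ j : Fin m → Fin n, f j :=
  Fintype.sum_equiv (Equiv.arrowCongr σ.symm (Equiv.refl (Fin n))) _ _ (fun _ => rfl)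

open Fin.NatCast in
/-- For a shift-invariant function, every slice sum equals the zero slice sum. -/
lemma const_slice {m n : ℕ} [NeZero n] (g : (Fin (m+1) → Fin n) → ℝ)
    (hg : ∀ j, g j = g (fun l => j l + 1)) (c : Fin n) :
    ∑ t : Fin m → Fin n, g (Fin.cons c t) = ∑ t : Fin m → Fin n, g (Fin.cons 0 t) := by
  have step : ∀ c : Fin n,
      ∑ t : Fin m → Fin n, g (Fin.cons c t) = ∑ t : Fin m → Fin n, g (Fin.cons (c+1) t) := by
    intro c
    have h1 : ∀ t : Fin m → Fin n,
        g (Fin.cons c t) = g (Fin.cons (c+1) (fun l => t l + 1)) := by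
      intro t
      rw [hg (Fin.cons c t)]
      congr 1
      funext l
      refine Fin.cases ?_ ?_ l <;> simp
    calc ∑ t : Fin m → Fin n, g (Fin.cons c t)
        = ∑ t : Fin m → Fin n, g (Fin.cons (c+1) (fun l => t l + 1)) := by
          exact Finset.sum_congr rfl (fun t _ => h1 t)
      _ = ∑ t : Fin m → Fin n, g (Fin.cons (c+1) t) := by
          exact Fintype.sum_equiv (Equiv.piCongrRight fun _ => Equiv.addRight (1 : Fin n))
            _ _ (fun t => rfl)
  have hk : ∀ k : ℕ, ∑ t : Fin m → Fin n, g (Fin.cons ((k : Fin n)) t)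
      = ∑ t : Fin m → Fin n, g (Fin.cons 0 t) := by
    intro k
    induction k with
    | zero => simp
    | succ k ih =>
        rw [show ((k+1 : ℕ) : Fin n) = (k : Fin n) + 1 by push_cast; ring, ← step (k : Fin n)]
        exact ih
  have := hk c.val
  rwa [Fin.cast_val_eq_self] at this

/-- The full sum of a shift-invariant function equals `n` times the zero-slice sum. -/
lemma sum_full {m n : ℕ} [NeZero n] (g : (Fin (m+1) → Fin n) → ℝ)
    (hg : ∀ j, g j = g (fun l => j l + 1)) :
    ∑ j : Fin (m+1) → Fin n, g j = n * ∑ t : Fin m → Fin n, g (Fin.cons 0 t) := by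
  have h1 : ∑ j : Fin (m+1) → Fin n, g j
      = ∑ p : Fin n × (Fin m → Fin n), g (Fin.cons p.1 p.2) :=
    (Fintype.sum_equiv (Fin.consEquiv fun _ => Fin n) _ _ (fun _ => rfl)).symm
  rw [h1, Fintype.sum_prod_type]
  rw [Finset.sum_congr rfl (fun c _ => const_slice g hg c)]
  simp [mul_comm]

/-- Main key lemma: for a shift-invariant function, the zero-slice sums of `g` and `symT g`
agree. -/
lemma key_s13 {m n : ℕ} [NeZero n] (g : (Fin (m+1) → Fin n) → ℝ)
    (hg : ∀ j, g j = g (fun l => j l + 1)) :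
    ∑ t : Fin m → Fin n, g (Fin.cons 0 t) = ∑ t : Fin m → Fin n, symT g (Fin.cons 0 t) := by
  have hs : ∀ j, symT g j = symT g (fun l => j l + 1) := by
    intro j
    unfold symT
    congr 1
    refine Finset.sum_congr rfl (fun σ _ => ?_)
    have h : ((fun l => j l + 1) ∘ σ) = fun l => (j ∘ σ) l + 1 := rfl
    rw [h, ← hg]
  have h3 : ∑ j : Fin (m+1) → Fin n, symT g j = ∑ j : Fin (m+1) → Fin n, g j := by
    unfold symT
    rw [← Finset.sum_div, Finset.sum_comm]
    rw [Finset.sum_congr rfl (fun σ _ => sum_comp_perm g σ)]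
    rw [Finset.sum_const, Finset.card_univ, Fintype.card_perm, Fintype.card_fin]
    rw [nsmul_eq_mul, mul_comm]
    exact mul_div_cancel_right₀ _ (by exact_mod_cast Nat.factorial_ne_zero (m+1))
  have h1 := sum_full g hg
  have h2 := sum_full (symT g) hs
  have hn : (n : ℝ) ≠ 0 := Nat.cast_ne_zero.mpr (NeZero.ne n)
  have : (n : ℝ) * ∑ t : Fin m → Fin n, g (Fin.cons 0 t)
      = (n : ℝ) * ∑ t : Fin m → Fin n, symT g (Fin.cons 0 t) := by
    rw [← h1, ← h2, h3]
  exact mul_left_cancel₀ hn this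

lemma neg_one_pow_mod {n : ℕ} (hn : Even n) (a : ℕ) : (-1:ℝ)^(a % n) = (-1)^a := by
  conv_rhs => rw [← Nat.div_add_mod a n, pow_add, pow_mul, Even.neg_one_pow hn, one_pow, one_mul]

lemma sign_succ {n : ℕ} [NeZero n] (hn : Even n) (x : Fin n) :
    (-1:ℝ) ^ ((x + 1 : Fin n) : ℕ) = -(-1:ℝ) ^ (x : ℕ) := by
  have h : ((x + 1 : Fin n) : ℕ) = ((x : ℕ) + 1) % n := by
    rw [Fin.add_def, Fin.val_one']
    simp [Nat.add_mod]
  rw [h, neg_one_pow_mod hn, pow_succ, mul_comm, neg_one_mul]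

/-- For any circulant tensor `A ∈ C_{m+1,n}`, `λ₀(A) = λ₀(sym(A))`, i.e. the sum of the
entries of the root tensor of `A` equals that of its symmetrization; if moreover the order
`m+1` and `n` are even, `λ_{n/2}(A) = λ_{n/2}(sym(A))`. -/
theorem stmt_13 (m n : ℕ) [NeZero n] (A : (Fin (m + 1) → Fin n) → ℝ)
    (hA : ∀ j : Fin (m + 1) → Fin n, A j = A (fun l => j l + 1)) :
    (∑ t : Fin m → Fin n, A (Fin.cons 0 t) = ∑ t : Fin m → Fin n, symT A (Fin.cons 0 t)) ∧
    (Even (m + 1) → Even n →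
      ∑ t : Fin m → Fin n, A (Fin.cons 0 t) * (-1 : ℝ) ^ (∑ l, (t l : ℕ))
        = ∑ t : Fin m → Fin n, symT A (Fin.cons 0 t) * (-1 : ℝ) ^ (∑ l, (t l : ℕ))) := by
  constructor
  · exact key_s13 A hA
  · intro hm hn
    set g : (Fin (m+1) → Fin n) → ℝ := fun j => A j * (-1:ℝ) ^ (∑ l, (j l : ℕ)) with hgdef
    have hsign : ∀ j : Fin (m+1) → Fin n,
        (-1:ℝ) ^ (∑ l, ((j l + 1 : Fin n) : ℕ)) = (-1:ℝ) ^ (∑ l, (j l : ℕ)) := by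
      intro j
      rw [← Finset.prod_pow_eq_pow_sum, ← Finset.prod_pow_eq_pow_sum]
      calc ∏ l : Fin (m+1), (-1:ℝ) ^ ((j l + 1 : Fin n) : ℕ)
          = ∏ l : Fin (m+1), (-1:ℝ) * (-1:ℝ) ^ ((j l : ℕ)) := by
            refine Finset.prod_congr rfl (fun l _ => ?_)
            rw [sign_succ hn, neg_one_mul]
        _ = (-1:ℝ) ^ (m+1) * ∏ l : Fin (m+1), (-1:ℝ) ^ ((j l : ℕ)) := by
            rw [Finset.prod_mul_distrib, Finset.prod_const, Finset.card_univ, Fintype.card_fin]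
        _ = ∏ l : Fin (m+1), (-1:ℝ) ^ ((j l : ℕ)) := by
            rw [Even.neg_one_pow hm, one_mul]
    have hg : ∀ j, g j = g (fun l => j l + 1) := by
      intro j
      simp only [hgdef]
      rw [← hA, hsign]
    have hk := key_s13 g hg
    have h0 : ∀ t : Fin m → Fin n,
        g (Fin.cons 0 t) = A (Fin.cons 0 t) * (-1:ℝ) ^ (∑ l, (t l : ℕ)) := by
      intro t
      simp only [hgdef]
      congr 2
      rw [Fin.sum_univ_succ]
      simp
    have hsym : ∀ jj : Fin (m+1) → Fin n,
        symT g jj = symT A jj * (-1:ℝ) ^ (∑ l, (jj l : ℕ)) := by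
      intro jj
      unfold symT
      rw [div_mul_eq_mul_div, Finset.sum_mul]
      congr 1
      refine Finset.sum_congr rfl (fun σ _ => ?_)
      simp only [hgdef]
      congr 2
      · exact Equiv.sum_comp σ (fun l => ((jj l : ℕ)))
    calc ∑ t : Fin m → Fin n, A (Fin.cons 0 t) * (-1:ℝ) ^ (∑ l, (t l : ℕ))
        = ∑ t : Fin m → Fin n, g (Fin.cons 0 t) := by
          exact Finset.sum_congr rfl (fun t _ => (h0 t).symm)
      _ = ∑ t : Fin m → Fin n, symT g (Fin.cons 0 t) := hk
      _ = ∑ t : Fin m → Fin n, symT A (Fin.cons 0 t) * (-1:ℝ) ^ (∑ l, (t l : ℕ)) := by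
          refine Finset.sum_congr rfl (fun t _ => ?_)
          rw [hsym]
          congr 2
          rw [Fin.sum_univ_succ]
          simp
end
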